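/- Let y, z : ℝ → ℝ be three times continuously differentiable with y''(s)² − z''(s)² > 0 for all s, set κ(s) = √(y''(s)² − z''(s)²) and τ(s) = (y''(s)·z'''(s) − y'''(s)·z''(s))/κ(s)², and let α_N(s) = N(s) = (1/κ(s))·(0, y''(s), z''(s)) be the principal normal spherical representation of the admissible pseudo-Galilean curve α(s) = (s, y(s), z(s)). Then the pseudo-Galilean norm of N'(s) equals |τ(s)|; consequently the pseudo-Galilean arc length of α_N from 0 to s equals ∫₀ˢ |τ(u)| du, i.e., the arc length parameter s_N of α_N satisfies ds_N/ds = |τ(s)|. -/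

import Mathlib

/-- The pseudo-Galilean norm of a vector `(0, a, b)` is `√|a² − b²|`. -/
noncomputable def pgNorm (v : Fin 3 → ℝ) : ℝ := Real.sqrt |(v 1) ^ 2 - (v 2) ^ 2|

/-- The pseudo-Galilean norm of `N'(s)` equals `|τ(s)|`; consequently the
pseudo-Galilean arc length of the principal normal spherical representation
`α_N = N` satisfies `s_N(s) = ∫₀ˢ |τ(u)| du`, i.e. `ds_N/ds = |τ(s)|`. -/
theorem pseudo_galilean_normal_spherical_arclength
    (y z κ τ sN : ℝ → ℝ) (αN : ℝ → Fin 3 → ℝ)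
    (hy : ContDiff ℝ 3 y) (hz : ContDiff ℝ 3 z)
    (hadm : ∀ s, 0 < (deriv (deriv y) s) ^ 2 - (deriv (deriv z) s) ^ 2)
    (hκ : ∀ s, κ s = Real.sqrt ((deriv (deriv y) s) ^ 2 - (deriv (deriv z) s) ^ 2))
    (hτ : ∀ s, τ s =
      (deriv (deriv y) s * deriv (deriv (deriv z)) s
        - deriv (deriv (deriv y)) s * deriv (deriv z) s) / (κ s) ^ 2)
    (hαN : ∀ s, αN s = (κ s)⁻¹ • ![0, deriv (deriv y) s, deriv (deriv z) s])
    (hsN : ∀ s, sN s = ∫ u in (0:ℝ)..s, pgNorm (deriv αN u)) :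
    (∀ s, pgNorm (deriv αN s) = |τ s|) ∧
    (∀ s, sN s = ∫ u in (0:ℝ)..s, |τ u|) ∧
    (∀ s, HasDerivAt sN (|τ s|) s) := by
  set Y := deriv (deriv y) with hYdef
  set Z := deriv (deriv z) with hZdef
  have hYc : ContDiff ℝ 1 Y := by
    have h3 : ContDiff ℝ (2+1) y := by norm_num at hy ⊢; exact hy
    have h2 : ContDiff ℝ (1+1) (deriv y) := (contDiff_succ_iff_deriv.mp h3).2.2
    exact (contDiff_succ_iff_deriv.mp h2).2.2
  have hZc : ContDiff ℝ 1 Z := by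
    have h3 : ContDiff ℝ (2+1) z := by norm_num at hz ⊢; exact hz
    have h2 : ContDiff ℝ (1+1) (deriv z) := (contDiff_succ_iff_deriv.mp h3).2.2
    exact (contDiff_succ_iff_deriv.mp h2).2.2
  have hYd : ∀ s, HasDerivAt Y (deriv Y s) s :=
    fun s => (hYc.differentiable one_ne_zero s).hasDerivAt
  have hZd : ∀ s, HasDerivAt Z (deriv Z s) s :=
    fun s => (hZc.differentiable one_ne_zero s).hasDerivAt
  have hκpos : ∀ s, 0 < κ s := fun s => by
    rw [hκ s]; exact Real.sqrt_pos.mpr (hadm s)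
  have hκsq : ∀ s, κ s ^ 2 = Y s ^ 2 - Z s ^ 2 := fun s => by
    rw [hκ s]; exact Real.sq_sqrt (le_of_lt (hadm s))
  have hκd : ∀ s, HasDerivAt κ ((Y s * deriv Y s - Z s * deriv Z s) / κ s) s := by
    intro s
    have h1 : HasDerivAt (fun u => Y u ^ 2 - Z u ^ 2)
        (2 * Y s * deriv Y s - 2 * Z s * deriv Z s) s := by
      have := ((hYd s).pow 2).sub ((hZd s).pow 2)
      exact this.congr_deriv (by push_cast; ring)
    have h2 := h1.sqrt (ne_of_gt (hadm s))
    have h3 : HasDerivAt (fun u => Real.sqrt (Y u ^ 2 - Z u ^ 2))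
        ((Y s * deriv Y s - Z s * deriv Z s) / κ s) s := by
      convert h2 using 1
      rw [← hκ s]
      field_simp [ne_of_gt (hκpos s)]
    exact h3.congr_of_eventuallyEq (Filter.Eventually.of_forall hκ)
  have hd1 : ∀ s, HasDerivAt (fun u => (κ u)⁻¹ * Y u)
      (Z s * (Y s * deriv Z s - deriv Y s * Z s) / κ s ^ 3) s := by
    intro s
    have h := ((hκd s).inv (ne_of_gt (hκpos s))).mul (hYd s)
    refine h.congr_deriv ?_; symm; simp only [Pi.inv_apply]
    have hk := hκsq s
    have hk0 := ne_of_gt (hκpos s)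
    have h4 : -((Y s * deriv Y s - Z s * deriv Z s)/κ s)/κ s^2 * Y s + (κ s)⁻¹ * deriv Y s
        = (deriv Y s * κ s^2 - (Y s * deriv Y s - Z s * deriv Z s) * Y s)/κ s^3 := by
      field_simp; ring
    rw [h4, hk]; field_simp; ring
  have hd2 : ∀ s, HasDerivAt (fun u => (κ u)⁻¹ * Z u)
      (Y s * (Y s * deriv Z s - deriv Y s * Z s) / κ s ^ 3) s := by
    intro s
    have h := ((hκd s).inv (ne_of_gt (hκpos s))).mul (hZd s)
    refine h.congr_deriv ?_; symm; simp only [Pi.inv_apply]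
    have hk := hκsq s
    have hk0 := ne_of_gt (hκpos s)
    have h4 : -((Y s * deriv Y s - Z s * deriv Z s)/κ s)/κ s^2 * Z s + (κ s)⁻¹ * deriv Z s
        = (deriv Z s * κ s^2 - (Y s * deriv Y s - Z s * deriv Z s) * Z s)/κ s^3 := by
      field_simp; ring
    rw [h4, hk]; field_simp; ring
  have hαNd : ∀ s, HasDerivAt αN
      (![0, Z s * (Y s * deriv Z s - deriv Y s * Z s) / κ s ^ 3,
          Y s * (Y s * deriv Z s - deriv Y s * Z s) / κ s ^ 3]) s := by
    intro s
    have h : HasDerivAt (fun u => ((κ u)⁻¹ • ![0, Y u, Z u] : Fin 3 → ℝ))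
        (![0, Z s * (Y s * deriv Z s - deriv Y s * Z s) / κ s ^ 3,
            Y s * (Y s * deriv Z s - deriv Y s * Z s) / κ s ^ 3]) s := by
      rw [hasDerivAt_pi]
      intro i
      fin_cases i <;>
        simp only [Pi.smul_apply, smul_eq_mul, Matrix.cons_val_zero, Matrix.cons_val_one,
          Matrix.head_cons, Matrix.cons_val_two, Matrix.tail_cons, Fin.isValue]
      · simpa using hasDerivAt_const s (0:ℝ)
      · exact hd1 s
      · exact hd2 s
    exact h.congr_of_eventuallyEq (Filter.Eventually.of_forall hαN)
  have hderiv : ∀ s, deriv αN s =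
      ![0, Z s * (Y s * deriv Z s - deriv Y s * Z s) / κ s ^ 3,
          Y s * (Y s * deriv Z s - deriv Y s * Z s) / κ s ^ 3] :=
    fun s => (hαNd s).deriv
  have part1 : ∀ s, pgNorm (deriv αN s) = |τ s| := by
    intro s
    rw [hderiv s]
    have hk0 := ne_of_gt (hκpos s)
    have habs : |(Z s * (Y s * deriv Z s - deriv Y s * Z s) / κ s ^ 3) ^ 2
        - (Y s * (Y s * deriv Z s - deriv Y s * Z s) / κ s ^ 3) ^ 2| = (τ s) ^ 2 := by
      have hv : (Z s * (Y s * deriv Z s - deriv Y s * Z s) / κ s ^ 3) ^ 2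
          - (Y s * (Y s * deriv Z s - deriv Y s * Z s) / κ s ^ 3) ^ 2 = -(τ s)^2 := by
        rw [hτ s]
        have h1 : (Z s * (Y s * deriv Z s - deriv Y s * Z s) / κ s ^ 3) ^ 2
            - (Y s * (Y s * deriv Z s - deriv Y s * Z s) / κ s ^ 3) ^ 2
            = (Y s * deriv Z s - deriv Y s * Z s)^2 * (Z s^2 - Y s^2) / κ s^6 := by
          field_simp
        have h2 : Z s^2 - Y s^2 = -(κ s^2) := by linarith [hκsq s]
        rw [h1, h2]; field_simp
      rw [hv, abs_neg, abs_of_nonneg (sq_nonneg _)]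
    simp only [pgNorm, Matrix.cons_val_one, Matrix.cons_val_zero, Matrix.head_cons, Matrix.cons_val_two,
      Matrix.tail_cons]
    rw [habs, Real.sqrt_sq_eq_abs]
  have part2 : ∀ s, sN s = ∫ u in (0:ℝ)..s, |τ u| := by
    intro s
    rw [hsN s]
    exact intervalIntegral.integral_congr fun u _ => part1 u
  refine ⟨part1, part2, ?_⟩
  have hκcont : Continuous κ := by
    have : Continuous fun s => Real.sqrt (Y s ^ 2 - Z s ^ 2) :=
      ((hYc.continuous.pow 2).sub (hZc.continuous.pow 2)).sqrt
    exact this.congr fun s => (hκ s).symm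
  have hτcont : Continuous τ := by
    have : Continuous fun s => (Y s * deriv Z s - deriv Y s * Z s) / κ s ^ 2 :=
      ((hYc.continuous.mul (hZc.continuous_deriv le_rfl)).sub
        ((hYc.continuous_deriv le_rfl).mul hZc.continuous)).div (hκcont.pow 2)
        (fun s => pow_ne_zero 2 (ne_of_gt (hκpos s)))
    exact this.congr fun s => (hτ s).symm
  have habscont : Continuous fun u => |τ u| := hτcont.abs
  intro s
  have hfun : sN = fun s => ∫ u in (0:ℝ)..s, |τ u| := funext part2
  rw [hfun]
  exact intervalIntegral.integral_hasDerivAt_right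
    (habscont.intervalIntegrable _ _)
    (habscont.stronglyMeasurableAtFilter _ _)
    habscont.continuousAt
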